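/- For every t ∈ ℂ, the deformed Lie algebra f_t (with bracket [e_1,h']_t = [e_1,h'] + t D(h') as described) is filiform of dimension 13: its lower central series has dimensions 11, 10, …, 1, 0. -/

import Mathlib

open scoped BigOperators

/-- Structure constants of the 13-dimensional filiform Lie algebra `f₁₃`:
`f13SC i j k` is the coefficient of `e_k` in `⁅e_i, e_j⁆` for `i < j`
(and `0` otherwise; the full antisymmetric constants are obtained below). -/
noncomputable def f13SC : ℕ → ℕ → ℕ → ℂ
  | 0, j, k => if 1 ≤ j ∧ j ≤ 11 ∧ k = j + 1 then 1 else 0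
  | 1, 2, 4 => 1
  | 1, 3, 5 => 1
  | 1, 4, 6 => 9/10
  | 1, 4, 8 => -1
  | 1, 5, 7 => 4/5
  | 1, 5, 9 => -2
  | 1, 6, 8 => 5/7
  | 1, 6, 10 => -335/126
  | 1, 6, 12 => 22105/15246
  | 1, 7, 9 => 9/14
  | 1, 7, 11 => -125/42
  | 1, 8, 10 => 7/12
  | 1, 8, 12 => -4421/1452
  | 1, 9, 11 => 8/15
  | 1, 10, 12 => 27/55
  | 2, 3, 6 => 1/10
  | 2, 3, 8 => 1
  | 2, 4, 7 => 1/10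
  | 2, 4, 9 => 1
  | 2, 5, 8 => 3/35
  | 2, 5, 10 => 83/126
  | 2, 5, 12 => -22105/15246
  | 2, 6, 9 => 1/14
  | 2, 6, 11 => 20/63
  | 2, 7, 10 => 5/84
  | 2, 7, 12 => 697/10164
  | 2, 8, 11 => 1/20
  | 2, 9, 12 => 7/165
  | 3, 4, 8 => 1/70
  | 3, 4, 10 => 43/126
  | 3, 4, 12 => 22105/15246
  | 3, 5, 9 => 1/70
  | 3, 5, 11 => 43/126
  | 3, 6, 10 => 1/84
  | 3, 6, 12 => 7589/30492
  | 3, 7, 11 => 1/105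
  | 3, 8, 12 => 1/132
  | 4, 5, 10 => 1/420
  | 4, 5, 12 => 313/3388
  | 4, 6, 11 => 1/420
  | 4, 7, 12 => 3/1540
  | 5, 6, 12 => 1/2310
  | _, _, _ => 0

/-- The full (antisymmetrized) structure constants of `f₁₃`. -/
noncomputable def f13C (i j k : Fin 13) : ℂ :=
  f13SC i j k - f13SC j i k

/-- Coefficient of `e_k` in `D e_j`, where `D` is the derivation of
`⟨e_2, …, e_12⟩` with `D e_2 = e_9`, `D e_3 = e_10`, `D e_4 = e_11`, `D e_5 = e_12`
and `D e_i = 0` for `6 ≤ i ≤ 12`. -/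
noncomputable def f13D : ℕ → ℕ → ℂ
  | 2, 9 => 1
  | 3, 10 => 1
  | 4, 11 => 1
  | 5, 12 => 1
  | _, _ => 0

/-- Structure constants of the deformed algebra `f_t`:
the bracket of `f₁₃` modified by `⁅e_1, e_j⁆_t = ⁅e_1, e_j⁆ + t D(e_j)`. -/
noncomputable def ftC (t : ℂ) (i j k : Fin 13) : ℂ :=
  f13C i j k + t * ((if (i : ℕ) = 1 then f13D j k else 0) -
    (if (j : ℕ) = 1 then f13D i k else 0))

/-- The deformed bracket `[·,·]_t` on `ℂ¹³` (coordinates with respect to `e_0, …, e_12`). -/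
noncomputable def ftBracket (t : ℂ) (x y : Fin 13 → ℂ) : Fin 13 → ℂ :=
  fun k => ∑ i : Fin 13, ∑ j : Fin 13, x i * y j * ftC t i j k

/-- The lower central series of the deformed algebra `f_t`. -/
noncomputable def ftLCS (t : ℂ) : ℕ → Submodule ℂ (Fin 13 → ℂ)
  | 0 => ⊤
  | i + 1 => Submodule.span ℂ {z | ∃ x : Fin 13 → ℂ, ∃ y ∈ ftLCS t i, z = ftBracket t x y}

lemma f13SC_first (j k : ℕ) :
    f13SC 0 j k = if 1 ≤ j ∧ j ≤ 11 ∧ k = j + 1 then 1 else 0 := rfl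

set_option maxHeartbeats 2000000 in
lemma f13SC_zero (a b k : ℕ) (h : k ≤ a + b) : f13SC a b k = 0 := by
  rcases a with _|_|_|_|_|_|a
  · rw [f13SC_first, if_neg (by omega)]
  all_goals (
    rcases b with _|_|_|_|_|_|_|_|_|_|_|b <;>
      first
      | rfl
      | (rcases k with _|_|_|_|_|_|_|_|_|_|_|_|_|k <;>
          first | rfl | (exfalso; omega)))

lemma f13SC_snd_zero (a k : ℕ) : f13SC a 0 k = 0 := by
  rcases a with _|_|_|_|_|_|a
  · rw [f13SC_first, if_neg (by omega)]
  all_goals rfl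

lemma f13D_zero (b k : ℕ) (h : k ≤ b + 6) : f13D b k = 0 := by
  rw [f13D.eq_def]
  split <;> first | rfl | (exfalso; omega)

lemma f13D_fst_zero (k : ℕ) : f13D 0 k = 0 := rfl

lemma ftC_zero (t : ℂ) (a b k : Fin 13) (h : (k : ℕ) ≤ (a : ℕ) + (b : ℕ)) :
    ftC t a b k = 0 := by
  unfold ftC f13C
  rw [f13SC_zero _ _ _ h, f13SC_zero _ _ _ (by omega)]
  have h1 : (if (a : ℕ) = 1 then f13D b k else 0) = 0 := by
    split
    · exact f13D_zero _ _ (by omega)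
    · rfl
  have h2 : (if (b : ℕ) = 1 then f13D a k else 0) = 0 := by
    split
    · exact f13D_zero _ _ (by omega)
    · rfl
  rw [h1, h2]; ring

lemma ftC_diag (t : ℂ) (a k : Fin 13) : ftC t a a k = 0 := by
  simp [ftC, f13C]

lemma ftC_e0 (t : ℂ) (j k : Fin 13) (h1 : 1 ≤ (j : ℕ)) (h2 : (j : ℕ) ≤ 11) :
    ftC t 0 j k = if (k : ℕ) = (j : ℕ) + 1 then 1 else 0 := by
  have h3 : (if (j : ℕ) = 1 then f13D 0 (k : ℕ) else 0) = 0 := by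
    split <;> [exact f13D_fst_zero _; rfl]
  unfold ftC f13C
  simp only [show ((0 : Fin 13) : ℕ) = 0 from rfl, f13SC_first, f13SC_snd_zero]
  rw [h3]
  simp [h1, h2]

/-- The submodule of vectors vanishing in coordinates `0, …, i`. -/
noncomputable def KK (i : ℕ) : Submodule ℂ (Fin 13 → ℂ) where
  carrier := {f | ∀ k : Fin 13, (k : ℕ) ≤ i → f k = 0}
  add_mem' := by intro a b ha hb k hk; simp [ha k hk, hb k hk]
  zero_mem' := by intro k hk; rfl
  smul_mem' := by intro c a ha k hk; simp [ha k hk]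

lemma mem_KK {i : ℕ} {f : Fin 13 → ℂ} :
    f ∈ KK i ↔ ∀ k : Fin 13, (k : ℕ) ≤ i → f k = 0 := Iff.rfl

lemma single_mem_KK {i : ℕ} {j : Fin 13} (h : i < (j : ℕ)) :
    Pi.single j (1 : ℂ) ∈ KK i := by
  intro k hk
  rw [Pi.single_apply, if_neg]
  intro e; subst e; omega

lemma bracket_single (t : ℂ) (m : Fin 13) (h1 : 1 ≤ (m : ℕ)) (h2 : (m : ℕ) ≤ 11) :
    ftBracket t (Pi.single 0 1) (Pi.single m 1) = Pi.single (m + 1) 1 := by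
  have hlt : m < Fin.last 12 := by
    rw [Fin.lt_def, Fin.val_last]; omega
  have hv : ((m + 1 : Fin 13) : ℕ) = (m : ℕ) + 1 := Fin.val_add_one_of_lt hlt
  funext k
  simp only [ftBracket, Pi.single_apply]
  rw [Finset.sum_eq_single (0 : Fin 13)]
  · rw [Finset.sum_eq_single m]
    · rw [if_pos rfl, if_pos rfl, one_mul, one_mul, ftC_e0 t m k h1 h2]
      by_cases hk : (k : ℕ) = (m : ℕ) + 1
      · rw [if_pos hk, if_pos (Fin.ext (show (k : ℕ) = ((m + 1 : Fin 13)) by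
          rw [hv]; exact hk))]
      · rw [if_neg hk, if_neg (fun e => hk (by rw [e]; exact hv))]
    · intro b _ hb; rw [if_neg hb]; ring
    · intro h; exact absurd (Finset.mem_univ m) h
  · intro a _ ha; rw [if_neg ha]; simp
  · intro h; exact absurd (Finset.mem_univ (0 : Fin 13)) h

lemma bracket_mem_KK1 (t : ℂ) (x y : Fin 13 → ℂ) : ftBracket t x y ∈ KK 1 := by
  intro k hk
  apply Finset.sum_eq_zero
  intro a _
  apply Finset.sum_eq_zero
  intro b _
  by_cases h : (a : ℕ) = 0 ∧ (b : ℕ) = 0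
  · have : a = b := Fin.ext (by omega)
    rw [this, ftC_diag, mul_zero]
  · rw [ftC_zero t a b k (by omega), mul_zero]

lemma bracket_mem_KK_succ (t : ℂ) (i : ℕ) (x y : Fin 13 → ℂ) (hy : y ∈ KK i) :
    ftBracket t x y ∈ KK (i + 1) := by
  intro k hk
  apply Finset.sum_eq_zero
  intro a _
  apply Finset.sum_eq_zero
  intro b _
  by_cases h : (b : ℕ) ≤ i
  · rw [hy b h, mul_zero, zero_mul]
  · rw [ftC_zero t a b k (by omega), mul_zero]

lemma span_step (t : ℂ) (i : ℕ) (M : Submodule ℂ (Fin 13 → ℂ))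
    (hle : ∀ x y, y ∈ M → ftBracket t x y ∈ KK (i + 1))
    (hmem : ∀ j : Fin 13, i < (j : ℕ) → Pi.single j (1 : ℂ) ∈ M) :
    Submodule.span ℂ {z | ∃ x : Fin 13 → ℂ, ∃ y ∈ M, z = ftBracket t x y} = KK (i + 1) := by
  apply le_antisymm
  · rw [Submodule.span_le]
    rintro z ⟨x, y, hy, rfl⟩
    exact hle x y hy
  · intro f hf
    have hf' : ∀ k : Fin 13, (k : ℕ) ≤ i + 1 → f k = 0 := hf
    rw [← Finset.univ_sum_single f]
    apply Submodule.sum_mem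
    intro j _
    by_cases hj : (j : ℕ) ≤ i + 1
    · rw [hf' j hj]; simp
    · have hsm : Pi.single j (f j) = f j • (Pi.single j (1 : ℂ) : Fin 13 → ℂ) := by
        rw [← Pi.single_smul, smul_eq_mul, mul_one]
      rw [hsm]
      apply Submodule.smul_mem
      apply Submodule.subset_span
      have hj' : i + 2 ≤ (j : ℕ) := by omega
      have hj12 : (j : ℕ) ≤ 12 := by omega
      set m : Fin 13 := ⟨(j : ℕ) - 1, by omega⟩ with hm
      have hmv : (m : ℕ) = (j : ℕ) - 1 := rfl
      refine ⟨Pi.single 0 1, Pi.single m 1, hmem m (by omega), ?_⟩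
      have hj_eq : (m + 1 : Fin 13) = j := Fin.ext (by
        rw [Fin.val_add_one_of_lt (by rw [Fin.lt_def, Fin.val_last]; omega)]
        omega)
      rw [bracket_single t m (by omega) (by omega), hj_eq]

lemma lcs_eq (t : ℂ) : ∀ i : ℕ, 1 ≤ i → ftLCS t i = KK i := by
  intro i h1
  induction i with
  | zero => omega
  | succ n ih =>
    have hstep : ftLCS t (n + 1) =
        Submodule.span ℂ {z | ∃ x : Fin 13 → ℂ, ∃ y ∈ ftLCS t n, z = ftBracket t x y} := rfl
    rcases Nat.eq_zero_or_pos n with h0 | hpos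
    · subst h0
      rw [hstep, show ftLCS t 0 = ⊤ from rfl]
      exact span_step t 0 ⊤ (fun x y _ => bracket_mem_KK1 t x y)
        (fun j _ => Submodule.mem_top)
    · rw [hstep, ih hpos]
      exact span_step t n (KK n) (fun x y hy => bracket_mem_KK_succ t n x y hy)
        (fun j hj => single_mem_KK hj)

lemma KK_eq_span (i : ℕ) : KK i = Submodule.span ℂ
    (Set.range (fun j : {j : Fin 13 // i < (j : ℕ)} =>
      (Pi.single (j : Fin 13) (1 : ℂ) : Fin 13 → ℂ))) := by
  apply le_antisymm
  · intro f hf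
    have hf' : ∀ k : Fin 13, (k : ℕ) ≤ i → f k = 0 := hf
    rw [← Finset.univ_sum_single f]
    apply Submodule.sum_mem
    intro j _
    by_cases hj : (j : ℕ) ≤ i
    · rw [hf' j hj]; simp
    · have hsm : Pi.single j (f j) = f j • (Pi.single j (1 : ℂ) : Fin 13 → ℂ) := by
        rw [← Pi.single_smul, smul_eq_mul, mul_one]
      rw [hsm]
      exact Submodule.smul_mem _ _ (Submodule.subset_span ⟨⟨j, by omega⟩, rfl⟩)
  · rw [Submodule.span_le]
    rintro z ⟨j, rfl⟩
    exact single_mem_KK j.2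

lemma single_indep (i : ℕ) : LinearIndependent ℂ
    (fun j : {j : Fin 13 // i < (j : ℕ)} =>
      (Pi.single (j : Fin 13) (1 : ℂ) : Fin 13 → ℂ)) := by
  have h := (Pi.basisFun ℂ (Fin 13)).linearIndependent
  have h2 := h.comp (fun j : {j : Fin 13 // i < (j : ℕ)} => (j : Fin 13))
    Subtype.val_injective
  have he : (fun j : {j : Fin 13 // i < (j : ℕ)} =>
      (Pi.single (j : Fin 13) (1 : ℂ) : Fin 13 → ℂ)) =
      (⇑(Pi.basisFun ℂ (Fin 13)) ∘ fun j : {j : Fin 13 // i < (j : ℕ)} => (j : Fin 13)) := by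
    funext j
    simp [Function.comp]
  rw [he]
  exact h2

/-- For every `t ∈ ℂ`, the deformed Lie algebra `f_t` is filiform of dimension 13:
its lower central series has dimensions `11, 10, …, 1, 0`. -/
theorem ft_filiform (t : ℂ) :
    ∀ i : ℕ, 1 ≤ i → i ≤ 12 → Module.finrank ℂ (ftLCS t i) = 12 - i := by
  intro i h1 h2
  rw [lcs_eq t i h1, KK_eq_span, finrank_span_eq_card (single_indep i)]
  interval_cases i <;> decide
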